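/- arXiv:2005.00161 — 5 statements merged into one kernel-verified Lean document; each statement's English description precedes it below -/
import Mathlib

section
/- For real numbers λ_i, λ_j, λ_k with λ_k ≥ λ_j ≥ λ_i ≥ 1, one has λ_i² + λ_j² + λ_k² − 2λ_iλ_j − 2λ_iλ_k − 2λ_kλ_j + 3λ_iλ_jλ_k ≥ 0, with equality if and only if λ_i = λ_j = λ_k = 1. -/
theorem stmt_0 (li lj lk : ℝ) (h1 : 1 ≤ li) (hij : li ≤ lj) (hjk : lj ≤ lk) :
    0 ≤ li^2 + lj^2 + lk^2 - 2*li*lj - 2*li*lk - 2*lk*lj + 3*li*lj*lk ∧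
    (li^2 + lj^2 + lk^2 - 2*li*lj - 2*li*lk - 2*lk*lj + 3*li*lj*lk = 0 ↔
      li = 1 ∧ lj = 1 ∧ lk = 1) := by
  have key : li + lj + lk - 3 ≤ li^2 + lj^2 + lk^2 - 2*li*lj - 2*li*lk - 2*lk*lj + 3*li*lj*lk := by
    nlinarith [sq_nonneg (li-1), sq_nonneg (lj-1), sq_nonneg (lk-1), sq_nonneg (lj-lk), sq_nonneg (li-lj), sq_nonneg (li+lj+lk-3), mul_nonneg (sub_nonneg.2 h1) (sub_nonneg.2 hij), mul_nonneg (sub_nonneg.2 h1) (sub_nonneg.2 hjk), mul_nonneg (sub_nonneg.2 hij) (sub_nonneg.2 hjk), mul_nonneg (mul_nonneg (sub_nonneg.2 h1) (sub_nonneg.2 hij)) (sub_nonneg.2 hjk)]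
  constructor
  · linarith
  · constructor
    · intro h
      have : li = 1 := by linarith
      have : lj = 1 := by linarith
      have : lk = 1 := by linarith
      refine ⟨by linarith, by linarith, by linarith⟩
    · rintro ⟨rfl, rfl, rfl⟩; ring
end

section
/- For any real numbers λ_i, λ_j, λ_k ≥ 1 the expression λ_k/(λ_iλ_j) + λ_i/(λ_jλ_k) + λ_j/(λ_kλ_i) − 2/λ_i − 2/λ_j − 2/λ_k + 3 is nonnegative, with equality if and only if λ_i = λ_j = λ_k = 1. -/
theorem stmt_1 (li lj lk : ℝ) (hi : 1 ≤ li) (hj : 1 ≤ lj) (hk : 1 ≤ lk) :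
    0 ≤ lk/(li*lj) + li/(lj*lk) + lj/(lk*li) - 2/li - 2/lj - 2/lk + 3 ∧
    (lk/(li*lj) + li/(lj*lk) + lj/(lk*li) - 2/li - 2/lj - 2/lk + 3 = 0 ↔
      li = 1 ∧ lj = 1 ∧ lk = 1) := by
  have hpi : (0:ℝ) < li := by linarith
  have hpj : (0:ℝ) < lj := by linarith
  have hpk : (0:ℝ) < lk := by linarith
  have hP : (0:ℝ) < li * lj * lk := by positivity
  have hx : 0 ≤ li - 1 := by linarith
  have hy : 0 ≤ lj - 1 := by linarith
  have hz : 0 ≤ lk - 1 := by linarith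
  have key : lk/(li*lj) + li/(lj*lk) + lj/(lk*li) - 2/li - 2/lj - 2/lk + 3 =
      (li^2 + lj^2 + lk^2 - 2*(li*lj + lj*lk + lk*li) + 3*(li*lj*lk)) / (li*lj*lk) := by
    field_simp
    ring
  have hF : 0 ≤ li^2 + lj^2 + lk^2 - 2*(li*lj + lj*lk + lk*li) + 3*(li*lj*lk) := by
    nlinarith [mul_nonneg hx hy, mul_nonneg hy hz, mul_nonneg hz hx,
      mul_nonneg (mul_nonneg hx hy) hz, sq_nonneg (li-1), sq_nonneg (lj-1), sq_nonneg (lk-1)]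
  refine ⟨by rw [key]; exact div_nonneg hF hP.le, ?_, ?_⟩
  · intro h
    rw [key, div_eq_zero_iff] at h
    have hF0 : li^2 + lj^2 + lk^2 - 2*(li*lj + lj*lk + lk*li) + 3*(li*lj*lk) = 0 := by
      rcases h with h | h
      · exact h
      · exact absurd h hP.ne'
    have hsum : li + lj + lk ≤ 3 := by
      nlinarith [mul_nonneg hx hy, mul_nonneg hy hz, mul_nonneg hz hx,
        mul_nonneg (mul_nonneg hx hy) hz, sq_nonneg (li-1), sq_nonneg (lj-1), sq_nonneg (lk-1)]
    exact ⟨by linarith, by linarith, by linarith⟩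
  · rintro ⟨rfl, rfl, rfl⟩
    norm_num
end

section
/- Let n ≥ 1 and let C_{ij}^k (1 ≤ i,j,k ≤ n) be real numbers, fully antisymmetric in all three indices in the sense that A_{ij}^k = (C_{ij}^k)² is symmetric in (i,j,k). Let λ_1,…,λ_n ≥ 1. If Σ_{i,j,k} (C_{ij}^k)² [λ_k/(λ_iλ_j) + 1 − 2/λ_i] ≤ 0, then for every triple (i,j,k) either C_{ij}^k = 0 or λ_i = λ_j = λ_k = 1. -/
/-- The symmetrized bracket. -/
noncomputable def hval (a b c : ℝ) : ℝ :=
  c/(a*b) + a/(b*c) + b/(c*a) + 3 - 2/a - 2/b - 2/c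

lemma hval_nonneg {a b c : ℝ} (ha : 1 ≤ a) (hb : 1 ≤ b) (hc : 1 ≤ c) :
    0 ≤ hval a b c := by
  have ha0 : (0:ℝ) < a := lt_of_lt_of_le one_pos ha
  have hb0 : (0:ℝ) < b := lt_of_lt_of_le one_pos hb
  have hc0 : (0:ℝ) < c := lt_of_lt_of_le one_pos hc
  have key : 0 ≤ a^2 + b^2 + c^2 + 3*a*b*c - 2*(a*b+b*c+c*a) := by
    nlinarith [mul_nonneg (sub_nonneg.2 ha) (sub_nonneg.2 hb),
      mul_nonneg (sub_nonneg.2 hb) (sub_nonneg.2 hc),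
      mul_nonneg (sub_nonneg.2 ha) (sub_nonneg.2 hc),
      mul_nonneg (mul_nonneg (sub_nonneg.2 ha) (sub_nonneg.2 hb)) (sub_nonneg.2 hc),
      sq_nonneg (a-1), sq_nonneg (b-1), sq_nonneg (c-1)]
  have expand : hval a b c = (a^2 + b^2 + c^2 + 3*a*b*c - 2*(a*b+b*c+c*a)) / (a*b*c) := by
    unfold hval; field_simp; ring
  rw [expand]
  positivity

lemma hval_eq_zero {a b c : ℝ} (ha : 1 ≤ a) (hb : 1 ≤ b) (hc : 1 ≤ c)
    (hz : hval a b c = 0) : a = 1 ∧ b = 1 ∧ c = 1 := by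
  have ha0 : (0:ℝ) < a := lt_of_lt_of_le one_pos ha
  have hb0 : (0:ℝ) < b := lt_of_lt_of_le one_pos hb
  have hc0 : (0:ℝ) < c := lt_of_lt_of_le one_pos hc
  have expand : hval a b c = (a^2 + b^2 + c^2 + 3*a*b*c - 2*(a*b+b*c+c*a)) / (a*b*c) := by
    unfold hval; field_simp; ring
  rw [expand, div_eq_zero_iff] at hz
  have hp : a^2 + b^2 + c^2 + 3*a*b*c - 2*(a*b+b*c+c*a) = 0 := by
    rcases hz with hz | hz
    · exact hz
    · exact absurd hz (by positivity)
  refine ⟨?_, ?_, ?_⟩ <;>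
  · nlinarith [mul_nonneg (sub_nonneg.2 ha) (sub_nonneg.2 hb),
      mul_nonneg (sub_nonneg.2 hb) (sub_nonneg.2 hc),
      mul_nonneg (sub_nonneg.2 ha) (sub_nonneg.2 hc),
      mul_nonneg (mul_nonneg (sub_nonneg.2 ha) (sub_nonneg.2 hb)) (sub_nonneg.2 hc),
      sq_nonneg (a-1), sq_nonneg (b-1), sq_nonneg (c-1)]

theorem stmt_9 (n : ℕ) (hn : 1 ≤ n) (C : Fin n → Fin n → Fin n → ℝ)
    (hsym : ∀ i j k : Fin n, (C i j k)^2 = (C j i k)^2 ∧ (C i j k)^2 = (C i k j)^2)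
    (lam : Fin n → ℝ) (hlam : ∀ i, 1 ≤ lam i)
    (h : ∑ i, ∑ j, ∑ k, (C i j k)^2 * (lam k / (lam i * lam j) + 1 - 2 / lam i) ≤ 0) :
    ∀ i j k : Fin n, C i j k = 0 ∨ (lam i = 1 ∧ lam j = 1 ∧ lam k = 1) := by
  set A : Fin n → Fin n → Fin n → ℝ := fun i j k => (C i j k)^2 with hA
  -- full symmetry of A
  have sym12 : ∀ i j k, A i j k = A j i k := fun i j k => (hsym i j k).1
  have sym23 : ∀ i j k, A i j k = A i k j := fun i j k => (hsym i j k).2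
  have sym13 : ∀ i j k, A i j k = A k j i := by
    intro i j k; rw [sym12, sym23, sym12]
  have symc : ∀ i j k, A i j k = A j k i := by
    intro i j k; rw [sym12, sym23]
  have symc2 : ∀ i j k, A i j k = A k i j := by
    intro i j k; rw [symc, symc]
  set g : Fin n → Fin n → Fin n → ℝ :=
    fun i j k => lam k / (lam i * lam j) + 1 - 2 / lam i with hg
  -- sum reindexing lemmas
  have swap12 : ∀ f : Fin n → Fin n → Fin n → ℝ,
      (∑ i, ∑ j, ∑ k, f i j k) = ∑ i, ∑ j, ∑ k, f j i k := fun f => Finset.sum_comm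
  have swap23 : ∀ f : Fin n → Fin n → Fin n → ℝ,
      (∑ i, ∑ j, ∑ k, f i j k) = ∑ i, ∑ j, ∑ k, f i k j := by
    intro f; exact Finset.sum_congr rfl fun i _ => Finset.sum_comm
  set T := ∑ i, ∑ j, ∑ k, A i j k * g i j k with hT
  have hT0 : T ≤ 0 := h
  -- the six reindexed versions
  have e1 : T = ∑ i, ∑ j, ∑ k, A i j k * g j i k := by
    rw [hT, swap12 (fun i j k => A i j k * g i j k)]
    exact Finset.sum_congr rfl fun i _ => Finset.sum_congr rfl fun j _ =>
      Finset.sum_congr rfl fun k _ => by rw [sym12 j i k]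
  have e2 : T = ∑ i, ∑ j, ∑ k, A i j k * g i k j := by
    rw [hT, swap23 (fun i j k => A i j k * g i j k)]
    exact Finset.sum_congr rfl fun i _ => Finset.sum_congr rfl fun j _ =>
      Finset.sum_congr rfl fun k _ => by rw [sym23 i k j]
  have e3 : T = ∑ i, ∑ j, ∑ k, A i j k * g k j i := by
    rw [hT, swap12 (fun i j k => A i j k * g i j k),
      swap23 (fun i j k => A j i k * g j i k),
      swap12 (fun i j k => A k i j * g k i j)]
    exact Finset.sum_congr rfl fun i _ => Finset.sum_congr rfl fun j _ =>
      Finset.sum_congr rfl fun k _ => by rw [← sym13 i j k]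
  have e4 : T = ∑ i, ∑ j, ∑ k, A i j k * g j k i := by
    rw [hT, swap23 (fun i j k => A i j k * g i j k),
      swap12 (fun i j k => A i k j * g i k j)]
    exact Finset.sum_congr rfl fun i _ => Finset.sum_congr rfl fun j _ =>
      Finset.sum_congr rfl fun k _ => by rw [← symc i j k]
  have e5 : T = ∑ i, ∑ j, ∑ k, A i j k * g k i j := by
    rw [hT, swap12 (fun i j k => A i j k * g i j k),
      swap23 (fun i j k => A j i k * g j i k)]
    exact Finset.sum_congr rfl fun i _ => Finset.sum_congr rfl fun j _ =>
      Finset.sum_congr rfl fun k _ => by rw [← symc2 i j k]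
  have six : 6 * T = ∑ i, ∑ j, ∑ k, A i j k * (2 * hval (lam i) (lam j) (lam k)) := by
    have gsum : ∀ i j k : Fin n,
        g i j k + g j i k + g i k j + g k j i + g j k i + g k i j
          = 2 * hval (lam i) (lam j) (lam k) := by
      intro i j k
      have hi : (0:ℝ) < lam i := lt_of_lt_of_le one_pos (hlam i)
      have hj : (0:ℝ) < lam j := lt_of_lt_of_le one_pos (hlam j)
      have hk : (0:ℝ) < lam k := lt_of_lt_of_le one_pos (hlam k)
      simp only [hg, hval]
      field_simp
      ring
    calc 6 * T = (∑ i, ∑ j, ∑ k, A i j k * g i j k) + (∑ i, ∑ j, ∑ k, A i j k * g j i k)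
          + (∑ i, ∑ j, ∑ k, A i j k * g i k j) + (∑ i, ∑ j, ∑ k, A i j k * g k j i)
          + (∑ i, ∑ j, ∑ k, A i j k * g j k i) + (∑ i, ∑ j, ∑ k, A i j k * g k i j) := by
          rw [← hT, ← e1, ← e2, ← e3, ← e4, ← e5]; ring
      _ = ∑ i, ∑ j, ∑ k, A i j k *
            (g i j k + g j i k + g i k j + g k j i + g j k i + g k i j) := by
          rw [← Finset.sum_add_distrib, ← Finset.sum_add_distrib,
            ← Finset.sum_add_distrib, ← Finset.sum_add_distrib, ← Finset.sum_add_distrib]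
          refine Finset.sum_congr rfl fun i _ => ?_
          rw [← Finset.sum_add_distrib, ← Finset.sum_add_distrib,
            ← Finset.sum_add_distrib, ← Finset.sum_add_distrib, ← Finset.sum_add_distrib]
          refine Finset.sum_congr rfl fun j _ => ?_
          rw [← Finset.sum_add_distrib, ← Finset.sum_add_distrib,
            ← Finset.sum_add_distrib, ← Finset.sum_add_distrib, ← Finset.sum_add_distrib]
          exact Finset.sum_congr rfl fun k _ => by ring
      _ = _ := Finset.sum_congr rfl fun i _ => Finset.sum_congr rfl fun j _ =>
          Finset.sum_congr rfl fun k _ => by rw [gsum i j k]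
  -- each term is nonnegative
  have termnn : ∀ i j k : Fin n, 0 ≤ A i j k * (2 * hval (lam i) (lam j) (lam k)) := by
    intro i j k
    exact mul_nonneg (sq_nonneg _) (by linarith [hval_nonneg (hlam i) (hlam j) (hlam k)])
  have sum_le : (∑ i, ∑ j, ∑ k, A i j k * (2 * hval (lam i) (lam j) (lam k))) ≤ 0 := by
    rw [← six]; linarith
  have sum_nn : (0:ℝ) ≤ ∑ i, ∑ j, ∑ k, A i j k * (2 * hval (lam i) (lam j) (lam k)) :=
    Finset.sum_nonneg fun i _ => Finset.sum_nonneg fun j _ =>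
      Finset.sum_nonneg fun k _ => termnn i j k
  have sum_zero := le_antisymm sum_le sum_nn
  -- conclude each term is zero
  have term_zero : ∀ i j k : Fin n, A i j k * (2 * hval (lam i) (lam j) (lam k)) = 0 := by
    intro i j k
    have h1 := (Finset.sum_eq_zero_iff_of_nonneg
      (fun i _ => Finset.sum_nonneg fun j _ => Finset.sum_nonneg fun k _ => termnn i j k)).1
      sum_zero i (Finset.mem_univ i)
    have h2 := (Finset.sum_eq_zero_iff_of_nonneg
      (fun j _ => Finset.sum_nonneg fun k _ => termnn i j k)).1 h1 j (Finset.mem_univ j)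
    exact (Finset.sum_eq_zero_iff_of_nonneg (fun k _ => termnn i j k)).1 h2 k
      (Finset.mem_univ k)
  intro i j k
  rcases mul_eq_zero.1 (term_zero i j k) with hz | hz
  · left; exact pow_eq_zero_iff (by norm_num) |>.1 hz
  · right
    have : hval (lam i) (lam j) (lam k) = 0 := by linarith
    exact hval_eq_zero (hlam i) (hlam j) (hlam k) this
end

section
/- Let g be a compact semi-simple real Lie algebra with bi-invariant inner product ⟨·,·⟩₀, orthonormal basis {E_i} of eigenvectors of a positive self-adjoint operator S with eigenvalues λ_i ≥ 1, and structure constants C_{ij}^k = ⟨[E_i,E_j],E_k⟩₀. If (1/4)Σ_{i,j,k}(C_{ij}^k)²[2/λ_i − λ_k/(λ_iλ_j)] ≥ (1/4)Σ_{i,j,k}(C_{ij}^k)², then λ_i = 1 for all i. -/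
open RealInnerProductSpace

private lemma sum3_comm23 {n : ℕ} (g : Fin n → Fin n → Fin n → ℝ) :
    ∑ i, ∑ j, ∑ k, g i j k = ∑ i, ∑ j, ∑ k, g i k j :=
  Finset.sum_congr rfl fun _ _ => Finset.sum_comm

private lemma keyineq (a b c : ℝ) (ha : 1 ≤ a) (hb : 0 < b) (hc : 0 < c) :
    (2/a - c/(a*b)) + (2/a - b/(a*c)) ≤ 2/a := by
  have ha0 : (0:ℝ) < a := lt_of_lt_of_le one_pos ha
  have h2 : 2/a ≤ c/(a*b) + b/(a*c) := by
    rw [div_add_div _ _ (by positivity : (a*b) ≠ 0) (by positivity : (a*c) ≠ 0),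
      div_le_div_iff₀ (by positivity) (by positivity)]
    nlinarith [mul_nonneg (sq_nonneg a) (sq_nonneg (b - c)), mul_pos hb hc, sq_nonneg a]
  linarith

theorem stmt_10 {L : Type*} [LieRing L] [LieAlgebra ℝ L]
    [NormedAddCommGroup L] [InnerProductSpace ℝ L] [FiniteDimensional ℝ L]
    (hskew : ∀ X Y Z : L, ⟪⁅X, Y⁆, Z⟫ = -⟪Y, ⁅X, Z⁆⟫)
    (hss : ∀ X : L, (∀ Y : L, killingForm ℝ L X Y = 0) → X = 0)
    {n : ℕ} (b : OrthonormalBasis (Fin n) ℝ L)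
    (C : Fin n → Fin n → Fin n → ℝ) (hC : ∀ i j k, C i j k = ⟪⁅b i, b j⁆, b k⟫)
    (S : L →ₗ[ℝ] L) (lam : Fin n → ℝ) (hS : ∀ i, S (b i) = lam i • b i)
    (hSsa : ∀ X Y : L, ⟪S X, Y⟫ = ⟪X, S Y⟫) (hSpos : ∀ i, 0 < lam i)
    (hlam : ∀ i, 1 ≤ lam i)
    (h : (1/4 : ℝ) * ∑ i, ∑ j, ∑ k, (C i j k)^2 * (2 / lam i - lam k / (lam i * lam j)) ≥
         (1/4 : ℝ) * ∑ i, ∑ j, ∑ k, (C i j k)^2) :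
    ∀ i, lam i = 1 := by
  classical
  -- antisymmetry of the structure constants in the last two slots
  have hCs2 : ∀ i j k, C i k j = - C i j k := by
    intro i j k
    rw [hC, hC, hskew (b i) (b k) (b j), real_inner_comm]
  have hQ23 : ∀ i j k, (C i k j)^2 = (C i j k)^2 := by
    intro i j k; rw [hCs2]; ring
  set f : Fin n → Fin n → Fin n → ℝ :=
    fun i j k => 2 / lam i - lam k / (lam i * lam j) with hf
  set Q : Fin n → Fin n → Fin n → ℝ := fun i j k => (C i j k)^2 with hQ
  have E23 : ∑ i, ∑ j, ∑ k, Q i j k * f i k j = ∑ i, ∑ j, ∑ k, Q i j k * f i j k := by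
    rw [sum3_comm23 (fun i j k => Q i j k * f i k j)]
    exact Finset.sum_congr rfl fun i _ => Finset.sum_congr rfl fun j _ =>
      Finset.sum_congr rfl fun k _ => by simp only [hQ, hQ23]
  have hf_ge : ∑ i, ∑ j, ∑ k, Q i j k * f i j k ≥ ∑ i, ∑ j, ∑ k, Q i j k := by
    have := h
    simp only [hQ, hf] at *
    linarith
  -- the sum of G := Q * (2 - f i j k - f i k j) is ≤ 0
  set G : Fin n → Fin n → Fin n → ℝ :=
    fun i j k => Q i j k * (2 - f i j k - f i k j) with hGdef
  clear_value f Q G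
  have hGsum : ∑ i, ∑ j, ∑ k, G i j k ≤ 0 := by
    have hsplit : ∀ i j k, G i j k
        = 2 * Q i j k - Q i j k * f i j k - Q i j k * f i k j := by
      intro i j k; simp only [hGdef]; ring
    simp only [hsplit, Finset.sum_sub_distrib]
    rw [E23]
    have h2 : ∑ i, ∑ j, ∑ k, 2 * Q i j k = 2 * ∑ i, ∑ j, ∑ k, Q i j k := by
      simp [Finset.mul_sum]
    rw [h2]
    linarith
  -- pointwise bound
  have hFle : ∀ i j k, f i j k + f i k j ≤ 2 / lam i := by
    intro i j k
    have := keyineq (lam i) (lam j) (lam k) (hlam i) (hSpos j) (hSpos k)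
    simp only [hf]
    linarith
  have hGnonneg : ∀ i j k, 0 ≤ G i j k := by
    intro i j k
    simp only [hGdef, hQ]
    apply mul_nonneg (sq_nonneg _)
    have h1 := hFle i j k
    have h2 : 2 / lam i ≤ 2 := by
      rw [div_le_iff₀ (hSpos i)]
      nlinarith [hlam i]
    linarith
  -- semisimplicity: every basis vector appears (first slot) in a nonzero C
  have hin : ∀ w : L, ⟪w, (0 : L)⟫ = 0 := by
    intro w
    have h1 := hskew 0 w 0
    have h2 := hskew 0 0 0
    rw [zero_lie, zero_lie] at h1
    rw [zero_lie] at h2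
    linarith
  have hext0 : ∀ v : L, (∀ k, ⟪b k, v⟫ = 0) → v = 0 := by
    intro v hv
    apply ext_inner_left ℝ
    intro w
    rw [hin, ← b.sum_repr' w, sum_inner]
    simp [real_inner_smul_left, hv]
  have hexists : ∀ i, ∃ j k, C i j k ≠ 0 := by
    intro i
    by_contra hcon
    push_neg at hcon
    have hbb : ∀ j, ⁅b i, b j⁆ = 0 := by
      intro j
      apply hext0
      intro k
      rw [real_inner_comm, ← hC]
      exact hcon j k
    have hvX : ∀ X : L, ⁅b i, X⁆ = 0 := by
      intro X
      apply hext0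
      intro k
      rw [real_inner_comm, hskew (b i) X (b k), hbb k, hin, neg_zero]
    have had : LieAlgebra.ad ℝ L (b i) = 0 := by
      have hz := lie_self (b i)
      refine DFunLike.ext _ _ fun X => ?_
      refine Eq.trans (b := ⁅b i, b i⁆) ?_ hz
      rw [LieAlgebra.ad_apply]
      apply ext_inner_left ℝ
      intro v
      rw [hvX X, hvX (b i)]
    have hki : ∀ Y : L, killingForm ℝ L (b i) Y = 0 := by
      intro Y
      rw [killingForm_apply_apply, had]
      simp
    have hbi : b i = 0 := hss _ hki
    have hnorm := b.orthonormal.1 i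
    rw [hbi, norm_eq_sqrt_real_inner, hin, Real.sqrt_zero] at hnorm
    norm_num at hnorm
  -- main argument
  intro i
  by_contra hne
  have hgt : 1 < lam i := lt_of_le_of_ne (hlam i) (Ne.symm hne)
  obtain ⟨j, k, hCne⟩ := hexists i
  have hGpos : 0 < G i j k := by
    simp only [hGdef, hQ]
    apply mul_pos
    · exact lt_of_le_of_ne (sq_nonneg _) (Ne.symm (pow_ne_zero 2 hCne))
    · have h1 := hFle i j k
      have h2 : 2 / lam i < 2 := by
        rw [div_lt_iff₀ (hSpos i)]
        nlinarith
      linarith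
  have hle1 : G i j k ≤ ∑ k', G i j k' :=
    Finset.single_le_sum (fun k' _ => hGnonneg i j k') (Finset.mem_univ k)
  have hle2 : ∑ k', G i j k' ≤ ∑ j', ∑ k', G i j' k' :=
    Finset.single_le_sum (fun j' _ => Finset.sum_nonneg fun k' _ => hGnonneg i j' k')
      (Finset.mem_univ j)
  have hle3 : ∑ j', ∑ k', G i j' k' ≤ ∑ i', ∑ j', ∑ k', G i' j' k' :=
    Finset.single_le_sum
      (fun i' _ => Finset.sum_nonneg fun j' _ => Finset.sum_nonneg fun k' _ => hGnonneg i' j' k')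
      (Finset.mem_univ i)
  linarith
end

section
/- Let g be a finite-dimensional real semi-simple Lie algebra with bi-invariant inner product and orthonormal basis {E_i}, structure constants C_{ij}^k, and λ_1,…,λ_n ≥ 1 with at least one λ_i > 1. Then (1/4)Σ_{i,j,k}(C_{ij}^k)²[2/λ_i − λ_k/(λ_iλ_j)] < (1/4)Σ_{i,j,k}(C_{ij}^k)². -/
open RealInnerProductSpace

private lemma swapsum {n : ℕ} (f : Fin n → Fin n → Fin n → ℝ) :
    ∑ i, ∑ j, ∑ k, f i j k = ∑ i, ∑ j, ∑ k, f i k j :=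
  Finset.sum_congr rfl fun i _ => Finset.sum_comm

private lemma tripleprod {n : ℕ} (f : Fin n → Fin n → Fin n → ℝ) :
    ∑ i, ∑ j, ∑ k, f i j k = ∑ p : Fin n × Fin n × Fin n, f p.1 p.2.1 p.2.2 := by
  rw [Fintype.sum_prod_type]
  exact Finset.sum_congr rfl fun i _ =>
    (Fintype.sum_prod_type (fun q : Fin n × Fin n => f i q.1 q.2)).symm

private lemma keyle2 {a b c : ℝ} (ha : 1 ≤ a) (hb : 1 ≤ b) (hc : 1 ≤ c) :
    (2/a - c/(a*b)) + (2/a - b/(a*c)) ≤ 2 := by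
  have pa : 0 < a := lt_of_lt_of_le one_pos ha
  have pb : 0 < b := lt_of_lt_of_le one_pos hb
  have pc : 0 < c := lt_of_lt_of_le one_pos hc
  have h : (2/a - c/(a*b)) + (2/a - b/(a*c))
      = (4*(b*c) - b^2 - c^2) / (a*b*c) := by
    field_simp
    ring
  rw [h, div_le_iff₀ (by positivity)]
  have h1 : 0 ≤ (a-1)*(b*c) := mul_nonneg (by linarith) (by positivity)
  nlinarith [sq_nonneg (b-c)]

private lemma keylt2 {a b c : ℝ} (ha : 1 ≤ a) (hb : 1 ≤ b) (hc : 1 ≤ c) (ha1 : 1 < a) :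
    (2/a - c/(a*b)) + (2/a - b/(a*c)) < 2 := by
  have pa : 0 < a := lt_of_lt_of_le one_pos ha
  have pb : 0 < b := lt_of_lt_of_le one_pos hb
  have pc : 0 < c := lt_of_lt_of_le one_pos hc
  have h : (2/a - c/(a*b)) + (2/a - b/(a*c))
      = (4*(b*c) - b^2 - c^2) / (a*b*c) := by
    field_simp
    ring
  rw [h, div_lt_iff₀ (by positivity)]
  have h1 : 0 < (a-1)*(b*c) := mul_pos (by linarith) (by positivity)
  nlinarith [sq_nonneg (b-c)]

theorem stmt_18 {L : Type*} [LieRing L] [LieAlgebra ℝ L]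
    [NormedAddCommGroup L] [InnerProductSpace ℝ L] [FiniteDimensional ℝ L]
    (hskew : ∀ X Y Z : L, ⟪⁅X, Y⁆, Z⟫ = -⟪Y, ⁅X, Z⁆⟫)
    (hss : ∀ X : L, (∀ Y : L, killingForm ℝ L X Y = 0) → X = 0)
    {n : ℕ} (b : OrthonormalBasis (Fin n) ℝ L)
    (C : Fin n → Fin n → Fin n → ℝ) (hC : ∀ i j k, C i j k = ⟪⁅b i, b j⁆, b k⟫)
    (lam : Fin n → ℝ) (hlam : ∀ i, 1 ≤ lam i) (hone : ∃ i, 1 < lam i) :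
    (1/4 : ℝ) * ∑ i, ∑ j, ∑ k, (C i j k)^2 * (2 / lam i - lam k / (lam i * lam j)) <
      (1/4 : ℝ) * ∑ i, ∑ j, ∑ k, (C i j k)^2 := by
  have hC2 : ∀ i j k, C i j k = - C i k j := by
    intro i j k
    rw [hC, hC, hskew, real_inner_comm]
  have hCsw : ∀ i j k, (C i k j)^2 = (C i j k)^2 := by
    intro i j k
    rw [hC2 i j k]
    ring
  obtain ⟨i0, hi0⟩ := hone
  -- there exist j, k with C i0 j k ≠ 0
  have hex : ∃ j k, C i0 j k ≠ 0 := by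
    by_contra hall
    push_neg at hall
    have hbr : ∀ j, ⁅b i0, b j⁆ = (@OfNat.ofNat L 0 (@Zero.toOfNat0 L (NormedAddCommGroup.toAddCommGroup (E := L)).toAddGroup.toSubNegMonoid.toAddMonoid.toZero)) := by
      intro j
      apply b.repr.injective
      rw [LinearIsometryEquiv.map_zero]
      ext k
      rw [b.repr_apply_apply]
      have h0 := hall j k
      rw [hC, real_inner_comm] at h0
      simpa using h0
    have hbrY : ∀ Y : L, ⁅b i0, Y⁆ = (@OfNat.ofNat L 0 (@Zero.toOfNat0 L (NormedAddCommGroup.toAddCommGroup (E := L)).toAddGroup.toSubNegMonoid.toAddMonoid.toZero)) := by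
      intro Y
      apply b.repr.injective
      rw [LinearIsometryEquiv.map_zero]
      ext k
      rw [b.repr_apply_apply]
      have h0 : ⟪⁅b i0, Y⁆, b k⟫ = -⟪Y, ⁅b i0, b k⁆⟫ := hskew _ _ _
      rw [hbr k, inner_zero_right] at h0
      rw [real_inner_comm] at h0
      simpa using h0
    have h00 := hbrY (b i0)
    rw [lie_self] at h00
    have hend : LieAlgebra.ad ℝ L (b i0) = 0 := by
      apply DFunLike.ext
      intro Y
      rw [LieAlgebra.ad_apply, hbrY Y, ← h00]
      rfl
    have hzero : b i0 = 0 := by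
      apply hss
      intro Y
      rw [killingForm_apply_apply, hend]
      simp
    have hnorm := b.orthonormal.1 i0
    rw [hzero, h00] at hnorm
    simp at hnorm
  obtain ⟨j0, k0, hj0⟩ := hex
  set A := ∑ i, ∑ j, ∑ k, (C i j k)^2 * (2 / lam i - lam k / (lam i * lam j)) with hA
  set B := ∑ i, ∑ j, ∑ k, (C i j k)^2 with hB
  have e1 : A = ∑ i, ∑ j, ∑ k, (C i j k)^2 * (2 / lam i - lam j / (lam i * lam k)) := by
    rw [hA, swapsum]
    exact Finset.sum_congr rfl fun i _ => Finset.sum_congr rfl fun j _ =>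
      Finset.sum_congr rfl fun k _ => by rw [hCsw]
  have h2A : A + A = ∑ i, ∑ j, ∑ k, (C i j k)^2 *
      ((2 / lam i - lam k / (lam i * lam j)) + (2 / lam i - lam j / (lam i * lam k))) := by
    nth_rewrite 2 [e1]
    rw [hA]
    simp only [mul_add, Finset.sum_add_distrib]
  have hlt : ∑ i, ∑ j, ∑ k, (C i j k)^2 *
      ((2 / lam i - lam k / (lam i * lam j)) + (2 / lam i - lam j / (lam i * lam k)))
      < ∑ i, ∑ j, ∑ k, 2 * (C i j k)^2 := by
    rw [tripleprod, tripleprod]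
    apply Finset.sum_lt_sum
    · intro p _
      have hle := keyle2 (hlam p.1) (hlam p.2.1) (hlam p.2.2)
      nlinarith [sq_nonneg (C p.1 p.2.1 p.2.2)]
    · refine ⟨(i0, j0, k0), Finset.mem_univ _, ?_⟩
      have hltf := keylt2 (hlam i0) (hlam j0) (hlam k0) hi0
      have hcp : 0 < (C i0 j0 k0)^2 :=
        lt_of_le_of_ne (sq_nonneg _) (Ne.symm (pow_ne_zero 2 hj0))
      calc (C i0 j0 k0)^2 * ((2 / lam i0 - lam k0 / (lam i0 * lam j0))
            + (2 / lam i0 - lam j0 / (lam i0 * lam k0)))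
          < (C i0 j0 k0)^2 * 2 := mul_lt_mul_of_pos_left hltf hcp
        _ = 2 * (C i0 j0 k0)^2 := by ring
  have h2B : ∑ i, ∑ j, ∑ k, 2 * (C i j k)^2 = 2 * B := by
    rw [hB]
    simp [Finset.mul_sum]
  rw [h2B, ← h2A] at hlt
  linarith
end
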